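/- Let k ≥ 1 be an integer and let G be an edge-colored graph containing no triangle (no cycle of length 3), with average color degree d̂(G) ≥ 2k. Then G contains a rainbow matching of size k. -/

import Mathlib

/-- The color degree of a vertex `v`: the number of distinct colors appearing
on edges of `G` incident to `v`. -/
noncomputable def colorDegree {V : Type*} (G : SimpleGraph V) (c : Sym2 V → ℕ) (v : V) : ℕ :=
  (c '' {e : Sym2 V | e ∈ G.edgeSet ∧ v ∈ e}).ncard

/-- `M` is a rainbow matching in the edge-colored graph `(G, c)`:
a set of edges of `G`, pairwise vertex-disjoint, with pairwise distinct colors. -/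
def IsRainbowMatching {V : Type*} (G : SimpleGraph V) (c : Sym2 V → ℕ)
    (M : Finset (Sym2 V)) : Prop :=
  ↑M ⊆ G.edgeSet ∧
  (∀ e ∈ M, ∀ f ∈ M, e ≠ f → ∀ v : V, v ∈ e → v ∉ f) ∧
  Set.InjOn c ↑M

section Aux
variable {V : Type*} {G : SimpleGraph V} {c : Sym2 V → ℕ}

lemma rainbow_subset {M N : Finset (Sym2 V)} (h : IsRainbowMatching G c M)
    (hNM : N ⊆ M) : IsRainbowMatching G c N := by
  obtain ⟨h1, h2, h3⟩ := h
  exact ⟨Set.Subset.trans (by exact_mod_cast hNM) h1,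
    fun e he f hf hne v hv => h2 e (hNM he) f (hNM hf) hne v hv,
    h3.mono (by exact_mod_cast hNM)⟩

lemma rainbow_insert [DecidableEq V] {M : Finset (Sym2 V)} (hM : IsRainbowMatching G c M)
    {e : Sym2 V} (he : e ∈ G.edgeSet) (hdisj : ∀ f ∈ M, ∀ z ∈ e, z ∉ f)
    (hc : c e ∉ c '' ↑M) :
    IsRainbowMatching G c (insert e M) ∧ (insert e M).card = M.card + 1 := by
  have heM : e ∉ M := fun h => hc ⟨e, by exact_mod_cast h, rfl⟩
  refine ⟨⟨?_, ?_, ?_⟩, Finset.card_insert_of_notMem heM⟩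
  · rw [Finset.coe_insert]
    exact Set.insert_subset he hM.1
  · intro e1 h1 e2 h2 hne v hv1
    rcases Finset.mem_insert.1 h1 with h1' | h1' <;>
      rcases Finset.mem_insert.1 h2 with h2' | h2'
    · exact absurd (h1'.trans h2'.symm) hne
    · subst h1'; exact hdisj e2 h2' v hv1
    · subst h2'; exact fun hv2 => hdisj e1 h1' v hv2 hv1
    · exact hM.2.1 e1 h1' e2 h2' hne v hv1
  · rw [Finset.coe_insert]
    intro x hx y hy hxy
    rcases Set.mem_insert_iff.1 hx with hx' | hx' <;>
      rcases Set.mem_insert_iff.1 hy with hy' | hy'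
    · rw [hx', hy']
    · subst hx'; exact absurd ⟨y, hy', hxy.symm⟩ hc
    · subst hy'; exact absurd ⟨x, hx', hxy⟩ hc
    · exact hM.2.2 hx' hy' hxy

end Aux



section B
variable {V : Type*} {G : SimpleGraph V} {c : Sym2 V → ℕ}

lemma incidence_eq (G : SimpleGraph V) (v : V) :
    {e : Sym2 V | e ∈ G.edgeSet ∧ v ∈ e} = (fun x => s(v, x)) '' {x | G.Adj v x} := by
  ext e
  constructor
  · rintro ⟨he, hv⟩
    refine ⟨Sym2.Mem.other hv, ?_, Sym2.other_spec hv⟩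
    have := Sym2.other_spec hv
    rw [← this] at he
    exact G.mem_edgeSet.1 he
  · rintro ⟨x, hx, rfl⟩
    exact ⟨G.mem_edgeSet.2 hx, Sym2.mem_mk_left v x⟩

lemma colorDegree_eq (G : SimpleGraph V) (c : Sym2 V → ℕ) (v : V) :
    colorDegree G c v = ((fun x => c s(v, x)) '' {x | G.Adj v x}).ncard := by
  unfold colorDegree
  rw [incidence_eq, Set.image_image]

lemma triangle_free_mem_unique (hC3 : G.CliqueFree 3) {v a b : V}
    (hva : G.Adj v a) (hvb : G.Adj v b) {e : Sym2 V} (he : e ∈ G.edgeSet)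
    (hae : a ∈ e) (hbe : b ∈ e) : a = b := by
  classical
  by_contra hab
  have heq : e = s(a, b) := (Sym2.mem_and_mem_iff hab).1 ⟨hae, hbe⟩
  rw [heq] at he
  exact hC3 {v, a, b} (SimpleGraph.is3Clique_triple_iff.2 ⟨hva, hvb, G.mem_edgeSet.1 he⟩)

/-- a vertex has at most one neighbor inside each matching edge -/
lemma nbrs_covered_le (hC3 : G.CliqueFree 3) {M : Finset (Sym2 V)}
    (hM : IsRainbowMatching G c M) (v : V) :
    {x | G.Adj v x ∧ ∃ f ∈ M, x ∈ f}.ncard ≤ M.card := by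
  classical
  have : {x | G.Adj v x ∧ ∃ f ∈ M, x ∈ f}.ncard ≤ (↑M : Set (Sym2 V)).ncard := by
    refine Set.ncard_le_ncard_of_injOn
      (fun x => if h : ∃ f ∈ M, x ∈ f then h.choose else s(x, x)) ?_ ?_ (Set.toFinite _)
    · rintro x ⟨-, hx⟩
      simp only [dif_pos hx]
      exact hx.choose_spec.1
    · rintro x ⟨hvx, hx⟩ y ⟨hvy, hy⟩ hxy
      simp only [dif_pos hx, dif_pos hy] at hxy
      have h1 := hx.choose_spec
      have h2 := hy.choose_spec
      rw [hxy] at h1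
      exact triangle_free_mem_unique hC3 hvx hvy (hM.1 (by exact_mod_cast h2.1))
        h1.2 h2.2
  rwa [Set.ncard_coe_finset] at this

end B

section C
variable {V : Type*} [DecidableEq V] {G : SimpleGraph V} {c : Sym2 V → ℕ}

lemma two_ext (hC3 : G.CliqueFree 3) {m : ℕ}
    (P : ∀ N, IsRainbowMatching G c N → N.card ≤ m)
    {M : Finset (Sym2 V)} (hM : IsRainbowMatching G c M) (hMc : M.card = m)
    {u v x y : V} (huv : s(u, v) ∈ M) (hvx : G.Adj v x) (huy : G.Adj u y)
    (hx : ∀ f ∈ M, x ∉ f) (hy : ∀ f ∈ M, y ∉ f)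
    (hcx : c s(v, x) ∉ c '' ↑(M.erase s(u, v)))
    (hcy : c s(u, y) ∉ c '' ↑(M.erase s(u, v)))
    (hne : c s(v, x) ≠ c s(u, y)) : False := by
  have hadj : G.Adj u v := G.mem_edgeSet.1 (hM.1 (by exact_mod_cast huv))
  have hm1 : 1 ≤ m := hMc ▸ Finset.card_pos.2 ⟨_, huv⟩
  have hxy : x ≠ y := by
    rintro rfl
    exact hC3 {u, v, x} (SimpleGraph.is3Clique_triple_iff.2 ⟨hadj, huy, hvx⟩)
  have hvmem : v ∈ s(u, v) := Sym2.mem_mk_right u v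
  have humem : u ∈ s(u, v) := Sym2.mem_mk_left u v
  set M₁ := M.erase s(u, v) with hM₁def
  have hM₁ : IsRainbowMatching G c M₁ := rainbow_subset hM (Finset.erase_subset _ _)
  have hvnot : ∀ f ∈ M₁, v ∉ f := by
    intro f hf
    have h := Finset.mem_erase.1 hf
    exact hM.2.1 _ huv f h.2 (Ne.symm h.1) v hvmem
  have hunot : ∀ f ∈ M₁, u ∉ f := by
    intro f hf
    have h := Finset.mem_erase.1 hf
    exact hM.2.1 _ huv f h.2 (Ne.symm h.1) u humem
  have hdisj1 : ∀ f ∈ M₁, ∀ z ∈ s(v, x), z ∉ f := by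
    intro f hf z hz
    rcases Sym2.mem_iff.1 hz with rfl | rfl
    · exact hvnot f hf
    · exact hx f (Finset.mem_of_mem_erase hf)
  obtain ⟨hM₂, hM₂c⟩ := rainbow_insert hM₁ (G.mem_edgeSet.2 hvx) hdisj1 hcx
  have hune : u ≠ x := fun h => hx _ huv (h ▸ humem)
  have hyne : y ≠ v := fun h => hy _ huv (h ▸ hvmem)
  have hdisj2 : ∀ f ∈ insert s(v, x) M₁, ∀ z ∈ s(u, y), z ∉ f := by
    intro f hf z hz
    rcases Finset.mem_insert.1 hf with hf' | hf'
    · subst hf'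
      rcases Sym2.mem_iff.1 hz with rfl | rfl
      · intro hmem
        rcases Sym2.mem_iff.1 hmem with h | h
        · exact hadj.ne h
        · exact hune h
      · intro hmem
        rcases Sym2.mem_iff.1 hmem with h | h
        · exact hyne h
        · exact hxy h.symm
    · rcases Sym2.mem_iff.1 hz with rfl | rfl
      · exact hunot f hf'
      · exact hy f (Finset.mem_of_mem_erase hf')
  have hcy2 : c s(u, y) ∉ c '' ↑(insert s(v, x) M₁) := by
    rw [Finset.coe_insert, Set.image_insert_eq]
    intro h
    rcases Set.mem_insert_iff.1 h with h' | h'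
    · exact hne h'.symm
    · exact hcy h'
  obtain ⟨hM₃, hM₃c⟩ := rainbow_insert hM₂ (G.mem_edgeSet.2 huy) hdisj2 hcy2
  have hP := P _ hM₃
  have hcM₁ : M₁.card = m - 1 := by rw [hM₁def, Finset.card_erase_of_mem huv, hMc]
  omega

def ACol (G : SimpleGraph V) (c : Sym2 V → ℕ) (M : Finset (Sym2 V)) (u v : V) : Set ℕ :=
  {t | (∃ x, G.Adj v x ∧ (∀ f ∈ M, x ∉ f) ∧ c s(v, x) = t) ∧ t ∉ c '' ↑(M.erase s(u, v))}

lemma ACol_finite [Fintype V] (M : Finset (Sym2 V)) (u v : V) : (ACol G c M u v).Finite := by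
  refine Set.Finite.subset (Set.finite_range fun x => c s(v, x)) ?_
  rintro t ⟨⟨x, -, -, rfl⟩, -⟩
  exact ⟨x, rfl⟩

lemma ACol_elem_eq (hC3 : G.CliqueFree 3) {m : ℕ}
    (P : ∀ N, IsRainbowMatching G c N → N.card ≤ m)
    {M : Finset (Sym2 V)} (hM : IsRainbowMatching G c M) (hMc : M.card = m)
    {u v : V} (huv : s(u, v) ∈ M)
    {p q : ℕ} (hp : p ∈ ACol G c M u v) (hq : q ∈ ACol G c M v u) : p = q := by
  by_contra hne
  obtain ⟨⟨x, hvx, hxout, rfl⟩, hpc⟩ := hp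
  obtain ⟨⟨y, huy, hyout, rfl⟩, hqc⟩ := hq
  have herase : M.erase s(v, u) = M.erase s(u, v) := by rw [Sym2.eq_swap]
  rw [herase] at hqc
  exact two_ext hC3 P hM hMc huv hvx huy hxout hyout hpc hqc hne

lemma covered_bound [Fintype V] (hC3 : G.CliqueFree 3) {M : Finset (Sym2 V)}
    (hM : IsRainbowMatching G c M) (u v : V) :
    colorDegree G c v ≤ M.card + (M.erase s(u, v)).card + (ACol G c M u v).ncard := by
  rw [colorDegree_eq]
  have hsplit : {x | G.Adj v x} =
      {x | G.Adj v x ∧ ∃ f ∈ M, x ∈ f} ∪ {x | G.Adj v x ∧ ¬∃ f ∈ M, x ∈ f} := by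
    ext x
    constructor
    · intro hx
      by_cases h : ∃ f ∈ M, x ∈ f
      · exact Or.inl ⟨hx, h⟩
      · exact Or.inr ⟨hx, h⟩
    · rintro (⟨hx, -⟩ | ⟨hx, -⟩) <;> exact hx
  rw [hsplit, Set.image_union]
  refine le_trans (Set.ncard_union_le _ _) ?_
  have h1 : ((fun x => c s(v, x)) '' {x | G.Adj v x ∧ ∃ f ∈ M, x ∈ f}).ncard ≤ M.card :=
    le_trans (Set.ncard_image_le (Set.toFinite _)) (nbrs_covered_le hC3 hM v)
  have h2 : ((fun x => c s(v, x)) '' {x | G.Adj v x ∧ ¬∃ f ∈ M, x ∈ f}).ncard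
      ≤ (M.erase s(u, v)).card + (ACol G c M u v).ncard := by
    have hsub : ((fun x => c s(v, x)) '' {x | G.Adj v x ∧ ¬∃ f ∈ M, x ∈ f})
        ⊆ (c '' ↑(M.erase s(u, v))) ∪ ACol G c M u v := by
      rintro t ⟨x, ⟨hvx, hxout⟩, rfl⟩
      by_cases h : c s(v, x) ∈ c '' ↑(M.erase s(u, v))
      · exact Or.inl h
      · exact Or.inr ⟨⟨x, hvx, fun f hf hxf => hxout ⟨f, hf, hxf⟩, rfl⟩, h⟩
    refine le_trans (Set.ncard_le_ncard hsub
      (Set.Finite.union (Set.toFinite _) (ACol_finite M u v))) ?_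
    refine le_trans (Set.ncard_union_le _ _) ?_
    exact add_le_add (le_trans (Set.ncard_image_le (Set.toFinite _))
      (le_of_eq (Set.ncard_coe_finset _))) le_rfl
  omega

lemma uncovered_bound [Fintype V] (hC3 : G.CliqueFree 3) {m : ℕ}
    (P : ∀ N, IsRainbowMatching G c N → N.card ≤ m)
    {M : Finset (Sym2 V)} (hM : IsRainbowMatching G c M) (hMc : M.card = m)
    {w : V} (hwout : ∀ f ∈ M, w ∉ f)
    {D : Finset (Sym2 V)} (hD : D ⊆ M)
    (hDav : ∀ e ∈ D, ∀ x, G.Adj w x → (∀ f ∈ M, x ∉ f) → c s(w, x) ≠ c e) :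
    colorDegree G c w + D.card ≤ 2 * m := by
  have hDM : (c '' ↑D) ⊆ c '' ↑M := Set.image_mono (by exact_mod_cast hD)
  have hcM : (c '' ↑M).ncard = m := by
    rw [Set.ncard_image_of_injOn hM.2.2, Set.ncard_coe_finset, hMc]
  have hcD : (c '' ↑D).ncard = D.card := by
    rw [Set.ncard_image_of_injOn (hM.2.2.mono (by exact_mod_cast hD)), Set.ncard_coe_finset]
  have hDle : D.card ≤ m := hMc ▸ Finset.card_le_card hD
  have hkey : colorDegree G c w ≤ m + (m - D.card) := by
    rw [colorDegree_eq]
    have hsplit : {x | G.Adj w x} =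
        {x | G.Adj w x ∧ ∃ f ∈ M, x ∈ f} ∪ {x | G.Adj w x ∧ ¬∃ f ∈ M, x ∈ f} := by
      ext x
      constructor
      · intro hx
        by_cases h : ∃ f ∈ M, x ∈ f
        · exact Or.inl ⟨hx, h⟩
        · exact Or.inr ⟨hx, h⟩
      · rintro (⟨hx, -⟩ | ⟨hx, -⟩) <;> exact hx
    rw [hsplit, Set.image_union]
    refine le_trans (Set.ncard_union_le _ _) ?_
    have h1 : ((fun x => c s(w, x)) '' {x | G.Adj w x ∧ ∃ f ∈ M, x ∈ f}).ncard ≤ m :=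
      le_trans (le_trans (Set.ncard_image_le (Set.toFinite _)) (nbrs_covered_le hC3 hM w))
        (le_of_eq hMc)
    have h2 : ((fun x => c s(w, x)) '' {x | G.Adj w x ∧ ¬∃ f ∈ M, x ∈ f}).ncard
        ≤ m - D.card := by
      have hsub : ((fun x => c s(w, x)) '' {x | G.Adj w x ∧ ¬∃ f ∈ M, x ∈ f})
          ⊆ (c '' ↑M) \ (c '' ↑D) := by
        rintro t ⟨x, ⟨hwx, hxout'⟩, rfl⟩
        have hxout : ∀ f ∈ M, x ∉ f := fun f hf hxf => hxout' ⟨f, hf, hxf⟩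
        constructor
        · by_contra hnot
          have hdisj : ∀ f ∈ M, ∀ z ∈ s(w, x), z ∉ f := by
            intro f hf z hz
            rcases Sym2.mem_iff.1 hz with rfl | rfl
            · exact hwout f hf
            · exact hxout f hf
          obtain ⟨hN, hNc⟩ := rainbow_insert hM (G.mem_edgeSet.2 hwx) hdisj hnot
          have := P _ hN
          omega
        · rintro ⟨e, heD, hce⟩
          exact hDav e (by exact_mod_cast heD) x hwx hxout hce.symm
      refine le_trans (Set.ncard_le_ncard hsub (Set.Finite.diff (Set.toFinite _))) ?_
      rw [Set.ncard_diff hDM, hcM, hcD]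
    omega
  omega
lemma witness_avoid [Fintype V] (hC3 : G.CliqueFree 3) {m : ℕ}
    (P : ∀ N, IsRainbowMatching G c N → N.card ≤ m)
    {M : Finset (Sym2 V)} (hM : IsRainbowMatching G c M) (hMc : M.card = m)
    {u v : V} (huv : s(u, v) ∈ M)
    (h3 : 3 ≤ (ACol G c M u v).ncard)
    {w : V} (hvw : G.Adj v w) (hwout : ∀ f ∈ M, w ∉ f)
    (hcw : c s(v, w) ∉ c '' ↑(M.erase s(u, v)))
    {x : V} (hwx : G.Adj w x) (hxout : ∀ f ∈ M, x ∉ f) :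
    c s(w, x) ≠ c s(u, v) := by
  intro hEq
  have hm1 : 1 ≤ m := hMc ▸ Finset.card_pos.2 ⟨_, huv⟩
  have hvmem : v ∈ s(u, v) := Sym2.mem_mk_right u v
  have hnsub : ¬ (ACol G c M u v ⊆ {c s(v, w), c s(u, v)}) := by
    intro hss
    have hle := Set.ncard_le_ncard hss (Set.toFinite _)
    have h2 : ({c s(v, w), c s(u, v)} : Set ℕ).ncard ≤ 2 := by
      refine le_trans (Set.ncard_insert_le _ _) ?_
      simp [Set.ncard_singleton]
    omega
  obtain ⟨a', ha', hanotin⟩ := Set.not_subset.1 hnsub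
  obtain ⟨⟨x', hvx', hx'out, hcx'⟩, ha'nc⟩ := ha'
  have ha'ne1 : a' ≠ c s(v, w) := fun h => hanotin (by rw [h]; exact Set.mem_insert _ _)
  have ha'ne2 : a' ≠ c s(u, v) := fun h => hanotin (by rw [h]; exact Set.mem_insert_of_mem _ rfl)
  have hM₁ : IsRainbowMatching G c (M.erase s(u, v)) :=
    rainbow_subset hM (Finset.erase_subset _ _)
  have hvnot : ∀ f ∈ M.erase s(u, v), v ∉ f := fun f hf =>
    hM.2.1 _ huv f (Finset.mem_erase.1 hf).2 (Ne.symm (Finset.mem_erase.1 hf).1) v hvmem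
  have hdisj : ∀ f ∈ M.erase s(u, v), ∀ z ∈ s(v, w), z ∉ f := by
    intro f hf z hz
    rcases Sym2.mem_iff.1 hz with rfl | rfl
    · exact hvnot f hf
    · exact hwout f (Finset.mem_of_mem_erase hf)
  obtain ⟨hMa, hMac⟩ := rainbow_insert hM₁ (G.mem_edgeSet.2 hvw) hdisj hcw
  have hMacard : (insert s(v, w) (M.erase s(u, v))).card = m := by
    rw [hMac, Finset.card_erase_of_mem huv, hMc]; omega
  have hswap : s(w, v) = s(v, w) := Sym2.eq_swap
  have hwv : s(w, v) ∈ insert s(v, w) (M.erase s(u, v)) := by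
    rw [hswap]; exact Finset.mem_insert_self _ _
  have hvwnot : s(v, w) ∉ M.erase s(u, v) := fun h =>
    hwout _ (Finset.mem_of_mem_erase h) (Sym2.mem_mk_right v w)
  have herase : (insert s(v, w) (M.erase s(u, v))).erase s(w, v) = M.erase s(u, v) := by
    rw [hswap]; exact Finset.erase_insert hvwnot
  refine two_ext hC3 P hMa hMacard hwv hvx' hwx ?_ ?_ ?_ ?_ ?_
  · intro f hf
    rcases Finset.mem_insert.1 hf with hf' | hf'
    · subst hf'
      intro hmem
      rcases Sym2.mem_iff.1 hmem with h | h
      · exact hvx'.ne' h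
      · exact ha'ne1 (by rw [← hcx', h])
    · exact hx'out f (Finset.mem_of_mem_erase hf')
  · intro f hf
    rcases Finset.mem_insert.1 hf with hf' | hf'
    · subst hf'
      intro hmem
      rcases Sym2.mem_iff.1 hmem with h | h
      · exact hxout _ huv (h ▸ hvmem)
      · exact hwx.ne' h
    · exact hxout f (Finset.mem_of_mem_erase hf')
  · rw [herase, hcx']
    exact ha'nc
  · rw [herase, hEq]
    rintro ⟨f, hf, hcf⟩
    have hfe := Finset.mem_erase.1 (Finset.mem_coe.1 hf)
    have : f = s(u, v) := hM.2.2 (Finset.mem_coe.2 hfe.2) (Finset.mem_coe.2 huv) hcf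
    exact hfe.1 this
  · rw [hcx', hEq]
    exact ha'ne2

lemma per_edge_good [Fintype V] (hC3 : G.CliqueFree 3) {m : ℕ}
    (P : ∀ N, IsRainbowMatching G c N → N.card ≤ m)
    {M : Finset (Sym2 V)} (hM : IsRainbowMatching G c M) (hMc : M.card = m)
    {u v : V} (huv : s(u, v) ∈ M) (h3 : 3 ≤ (ACol G c M u v).ncard) :
    ∃ S : Finset V,
      (∀ w ∈ S, ∀ f ∈ M, w ∉ f) ∧
      (∀ w ∈ S, ∀ x, G.Adj w x → (∀ f ∈ M, x ∉ f) → c s(w, x) ≠ c s(u, v)) ∧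
      colorDegree G c u + colorDegree G c v ≤ 4 * m + 2 + S.card := by
  classical
  have hm1 : 1 ≤ m := hMc ▸ Finset.card_pos.2 ⟨_, huv⟩
  have hAu_le : (ACol G c M v u).ncard ≤ 1 := by
    obtain ⟨r, hr⟩ := Set.nonempty_of_ncard_ne_zero
      (show (ACol G c M u v).ncard ≠ 0 by omega)
    have hsub : ACol G c M v u ⊆ {r} := fun q hq =>
      Set.mem_singleton_iff.2 (ACol_elem_eq hC3 P hM hMc huv hr hq).symm
    calc (ACol G c M v u).ncard ≤ ({r} : Set ℕ).ncard :=
          Set.ncard_le_ncard hsub (Set.toFinite _)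
      _ = 1 := Set.ncard_singleton r
  have hdv := covered_bound hC3 hM u v
  have hdu := covered_bound hC3 hM v u
  have hea : (M.erase s(u, v)).card = m - 1 := by
    rw [Finset.card_erase_of_mem huv, hMc]
  have heb : (M.erase s(v, u)).card = m - 1 := by
    have hsw : s(v, u) = s(u, v) := Sym2.eq_swap
    rw [hsw, hea]
  -- witness construction
  have hfin := ACol_finite (G := G) (c := c) M u v
  set A := ACol G c M u v with hA
  have hmemA : ∀ t, t ∈ A → (∃ x, G.Adj v x ∧ (∀ f ∈ M, x ∉ f) ∧ c s(v, x) = t)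
      ∧ t ∉ c '' ↑(M.erase s(u, v)) := fun t ht => ht
  set F : ℕ → V := fun t => if h : t ∈ A then (hmemA t h).1.choose else v with hF
  have hFspec : ∀ t (h : t ∈ A),
      G.Adj v (F t) ∧ (∀ f ∈ M, F t ∉ f) ∧ c s(v, F t) = t := by
    intro t h
    have : F t = (hmemA t h).1.choose := by rw [hF]; exact dif_pos h
    rw [this]
    exact (hmemA t h).1.choose_spec
  refine ⟨hfin.toFinset.image F, ?_, ?_, ?_⟩
  · intro w hw
    obtain ⟨t, ht, rfl⟩ := Finset.mem_image.1 hw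
    have htA : t ∈ A := (Set.Finite.mem_toFinset hfin).1 ht
    exact (hFspec t htA).2.1
  · intro w hw x hwx hxout
    obtain ⟨t, ht, rfl⟩ := Finset.mem_image.1 hw
    have htA : t ∈ A := (Set.Finite.mem_toFinset hfin).1 ht
    obtain ⟨hadj, hout, hcol⟩ := hFspec t htA
    refine witness_avoid hC3 P hM hMc huv h3 hadj hout ?_ hwx hxout
    rw [hcol]
    exact (hmemA t htA).2
  · have hcard : (hfin.toFinset.image F).card = A.ncard := by
      rw [Finset.card_image_of_injOn, Set.ncard_eq_toFinset_card _ hfin]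
      intro t1 ht1 t2 ht2 hft
      have h1 := (hFspec t1 ((Set.Finite.mem_toFinset hfin).1 ht1)).2.2
      have h2 := (hFspec t2 ((Set.Finite.mem_toFinset hfin).1 ht2)).2.2
      rw [← h1, ← h2, hft]
    rw [hcard]
    omega

lemma per_edge [Fintype V] (hC3 : G.CliqueFree 3) {m : ℕ}
    (P : ∀ N, IsRainbowMatching G c N → N.card ≤ m)
    {M : Finset (Sym2 V)} (hM : IsRainbowMatching G c M) (hMc : M.card = m)
    {e₀ : Sym2 V} (he₀ : e₀ ∈ M) :
    ∃ S : Finset V,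
      (∀ w ∈ S, ∀ f ∈ M, w ∉ f) ∧
      (∀ w ∈ S, ∀ x, G.Adj w x → (∀ f ∈ M, x ∉ f) → c s(w, x) ≠ c e₀) ∧
      (∑ z ∈ Finset.univ.filter (· ∈ e₀), colorDegree G c z) ≤ 4 * m + 2 + S.card := by
  classical
  induction e₀ using Sym2.ind with
  | _ a b =>
  have hadj : G.Adj a b := G.mem_edgeSet.1 (hM.1 (Finset.mem_coe.2 he₀))
  have hm1 : 1 ≤ m := hMc ▸ Finset.card_pos.2 ⟨_, he₀⟩
  have hfil : Finset.univ.filter (· ∈ s(a, b)) = {a, b} := by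
    ext z; simp [Sym2.mem_iff]
  have hsum : ∑ z ∈ Finset.univ.filter (· ∈ s(a, b)), colorDegree G c z
      = colorDegree G c a + colorDegree G c b := by
    rw [hfil, Finset.sum_pair hadj.ne]
  have hba : s(b, a) ∈ M := by rwa [Sym2.eq_swap]
  by_cases h3b : 3 ≤ (ACol G c M a b).ncard
  · obtain ⟨S, h1, h2, h4⟩ := per_edge_good hC3 P hM hMc he₀ h3b
    exact ⟨S, h1, h2, by rw [hsum]; omega⟩
  by_cases h3a : 3 ≤ (ACol G c M b a).ncard
  · obtain ⟨S, h1, h2, h4⟩ := per_edge_good hC3 P hM hMc hba h3a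
    refine ⟨S, h1, ?_, by rw [hsum]; omega⟩
    have hsw : s(b, a) = s(a, b) := Sym2.eq_swap
    rw [← hsw]
    exact h2
  · refine ⟨∅, by simp, by simp, ?_⟩
    rw [hsum]
    have hdb := covered_bound hC3 hM a b
    have hda := covered_bound hC3 hM b a
    have hea : (M.erase s(a, b)).card = m - 1 := by
      rw [Finset.card_erase_of_mem he₀, hMc]
    have heb : (M.erase s(b, a)).card = m - 1 := by
      have hsw : s(b, a) = s(a, b) := Sym2.eq_swap
      rw [hsw, hea]
    rw [hMc] at hdb hda
    omega

lemma main_count [Fintype V] (hC3 : G.CliqueFree 3) {m : ℕ}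
    (P : ∀ N, IsRainbowMatching G c N → N.card ≤ m)
    {M : Finset (Sym2 V)} (hM : IsRainbowMatching G c M) (hMc : M.card = m) :
    2 * m ≤ Fintype.card V ∧
    ∑ v, colorDegree G c v ≤ 2 * m * Fintype.card V + 2 * m := by
  classical
  set UF := Finset.univ.filter (fun z : V => ∃ f ∈ M, z ∈ f) with hUF
  set WF := Finset.univ.filter (fun z : V => ¬∃ f ∈ M, z ∈ f) with hWF
  have hbi : UF = M.biUnion (fun e => Finset.univ.filter (· ∈ e)) := by
    ext z
    simp [hUF]
  have hpair : ∀ e ∈ M, (Finset.univ.filter (· ∈ e)).card = 2 := by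
    intro e he
    induction e using Sym2.ind with
    | _ a b =>
    have hadj : G.Adj a b := G.mem_edgeSet.1 (hM.1 (Finset.mem_coe.2 he))
    have hf2 : Finset.univ.filter (· ∈ s(a, b)) = {a, b} := by
      ext z; simp [Sym2.mem_iff]
    rw [hf2, Finset.card_pair hadj.ne]
  have hdis : ∀ e1 ∈ M, ∀ e2 ∈ M, e1 ≠ e2 →
      Disjoint (Finset.univ.filter (· ∈ e1)) (Finset.univ.filter (· ∈ e2)) := by
    intro e1 h1 e2 h2 hne
    rw [Finset.disjoint_left]
    intro z hz1 hz2
    exact hM.2.1 e1 h1 e2 h2 hne z (by simpa using hz1) (by simpa using hz2)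
  have hdis' : (↑M : Set (Sym2 V)).PairwiseDisjoint
      (fun e => Finset.univ.filter (· ∈ e)) := by
    intro e1 h1 e2 h2 hne
    exact hdis e1 (Finset.mem_coe.1 h1) e2 (Finset.mem_coe.1 h2) hne
  have hUFcard : UF.card = 2 * m := by
    rw [hbi, Finset.card_biUnion hdis, Finset.sum_congr rfl hpair,
      Finset.sum_const, hMc, smul_eq_mul]
    ring
  have hUWcard : UF.card + WF.card = Fintype.card V := by
    rw [hUF, hWF, ← Finset.card_univ]
    exact Finset.card_filter_add_card_filter_not _
  have hch : ∀ e ∈ M, ∃ S : Finset V, (∀ w ∈ S, ∀ f ∈ M, w ∉ f) ∧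
      (∀ w ∈ S, ∀ x, G.Adj w x → (∀ f ∈ M, x ∉ f) → c s(w, x) ≠ c e) ∧
      (∑ z ∈ Finset.univ.filter (· ∈ e), colorDegree G c z) ≤ 4 * m + 2 + S.card :=
    fun e he => per_edge hC3 P hM hMc he
  choose! S hS1 hS2 hS3 using hch
  have hUsum : ∑ z ∈ UF, colorDegree G c z
      ≤ (4 * m + 2) * m + ∑ e ∈ M, (S e).card := by
    rw [hbi, Finset.sum_biUnion hdis']
    calc ∑ e ∈ M, ∑ z ∈ Finset.univ.filter (· ∈ e), colorDegree G c z
        ≤ ∑ e ∈ M, (4 * m + 2 + (S e).card) := Finset.sum_le_sum (fun e he => hS3 e he)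
      _ = (4 * m + 2) * m + ∑ e ∈ M, (S e).card := by
          rw [Finset.sum_add_distrib, Finset.sum_const, hMc, smul_eq_mul]
          ring
  have hWsum : ∀ w ∈ WF,
      colorDegree G c w + (M.filter (fun e => w ∈ S e)).card ≤ 2 * m := by
    intro w hw
    have hwout : ∀ f ∈ M, w ∉ f := by
      have h := (Finset.mem_filter.1 hw).2
      push_neg at h
      exact h
    refine uncovered_bound hC3 P hM hMc hwout (Finset.filter_subset _ _) ?_
    intro e heD x hx hxout
    have he' := Finset.mem_filter.1 heD
    exact hS2 e he'.1 w he'.2 x hx hxout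
  have hWsum2 : (∑ w ∈ WF, colorDegree G c w)
      + ∑ w ∈ WF, (M.filter (fun e => w ∈ S e)).card ≤ 2 * m * WF.card := by
    rw [← Finset.sum_add_distrib]
    calc ∑ w ∈ WF, (colorDegree G c w + (M.filter (fun e => w ∈ S e)).card)
        ≤ ∑ _w ∈ WF, 2 * m := Finset.sum_le_sum hWsum
      _ = 2 * m * WF.card := by rw [Finset.sum_const, smul_eq_mul]; ring
  have hswap : ∑ w ∈ WF, (M.filter (fun e => w ∈ S e)).card
      = ∑ e ∈ M, (S e).card := by
    have h1 : ∀ w, (M.filter (fun e => w ∈ S e)).card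
        = ∑ e ∈ M, if w ∈ S e then 1 else 0 := fun w => Finset.card_filter _ _
    rw [Finset.sum_congr rfl (fun w _ => h1 w), Finset.sum_comm]
    refine Finset.sum_congr rfl ?_
    intro e he
    have h2 : (∑ w ∈ WF, if w ∈ S e then 1 else 0)
        = (WF.filter (fun w => w ∈ S e)).card := (Finset.card_filter _ _).symm
    rw [h2]
    congr 1
    ext w
    simp only [Finset.mem_filter]
    constructor
    · rintro ⟨-, h⟩; exact h
    · intro h
      refine ⟨?_, h⟩
      rw [hWF]
      simp only [Finset.mem_filter, Finset.mem_univ, true_and]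
      rintro ⟨f, hf, hwf⟩
      exact hS1 e he w h f hf hwf
  constructor
  · calc 2 * m = UF.card := hUFcard.symm
      _ ≤ Fintype.card V := by rw [← Finset.card_univ]; exact Finset.card_le_card (Finset.subset_univ _)
  · have hsplitV : ∑ v, colorDegree G c v
        = (∑ z ∈ UF, colorDegree G c z) + ∑ z ∈ WF, colorDegree G c z := by
      rw [hUF, hWF]
      exact (Finset.sum_filter_add_sum_filter_not _ _ _).symm
    have hrhs : 2 * m * Fintype.card V + 2 * m
        = (4 * m + 2) * m + 2 * m * WF.card := by
      rw [← hUWcard, hUFcard]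
      ring
    rw [hswap] at hWsum2
    rw [hsplitV, hrhs]
    omega

end C


/-- Kritschgau: every triangle-free edge-colored graph with average color degree at
least `2k` contains a rainbow matching of size `k`. -/
theorem rainbow_matching_triangle_free_avg_color_degree
    {V : Type*} [Fintype V] (k : ℕ) (hk : 1 ≤ k)
    (G : SimpleGraph V) (c : Sym2 V → ℕ)
    (hC3 : G.CliqueFree 3)
    (havg : (2 * (k : ℚ)) ≤ (∑ v, (colorDegree G c v : ℚ)) / (Fintype.card V : ℚ)) :
    ∃ M : Finset (Sym2 V), IsRainbowMatching G c M ∧ M.card = k := by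
  classical
  by_contra hcon
  push_neg at hcon
  have hn : 0 < Fintype.card V := by
    by_contra h
    push_neg at h
    have h0 : Fintype.card V = 0 := Nat.le_zero.1 h
    rw [h0] at havg
    norm_num at havg
    have h1 : (1 : ℚ) ≤ (k : ℚ) := by exact_mod_cast hk
    linarith
  have hempty : IsRainbowMatching G c (∅ : Finset (Sym2 V)) :=
    ⟨by simp, by simp, by simp⟩
  obtain ⟨M, hMmem, hmax⟩ := Finset.exists_max_image
    (Finset.univ.filter (fun N : Finset (Sym2 V) => IsRainbowMatching G c N))
    Finset.card ⟨∅, Finset.mem_filter.2 ⟨Finset.mem_univ _, hempty⟩⟩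
  have hMrb : IsRainbowMatching G c M := (Finset.mem_filter.1 hMmem).2
  set m := M.card with hm
  have P : ∀ N, IsRainbowMatching G c N → N.card ≤ m := fun N hN =>
    hmax N (Finset.mem_filter.2 ⟨Finset.mem_univ _, hN⟩)
  have hmk : m + 1 ≤ k := by
    by_contra h
    push_neg at h
    obtain ⟨N, hNsub, hNcard⟩ := Finset.exists_subset_card_eq (show k ≤ M.card by omega)
    exact hcon N (rainbow_subset hMrb hNsub) hNcard
  obtain ⟨h2m, hcount⟩ := main_count hC3 P hMrb rfl
  have hS : 2 * k * Fintype.card V ≤ ∑ v, colorDegree G c v := by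
    have hnq : (0 : ℚ) < (Fintype.card V : ℚ) := by exact_mod_cast hn
    have h1 : (2 * (k : ℚ)) * (Fintype.card V : ℚ) ≤ ∑ v, (colorDegree G c v : ℚ) :=
      (le_div_iff₀ hnq).1 havg
    have h2 : ((2 * k * Fintype.card V : ℕ) : ℚ) ≤ ((∑ v, colorDegree G c v : ℕ) : ℚ) := by
      push_cast
      linarith
    exact_mod_cast h2
  have hfin : 2 * (m + 1) * Fintype.card V ≤ 2 * k * Fintype.card V :=
    Nat.mul_le_mul_right _ (Nat.mul_le_mul_left _ hmk)
  have hchain : 2 * (m + 1) * Fintype.card V ≤ 2 * m * Fintype.card V + 2 * m :=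
    le_trans hfin (le_trans hS hcount)
  have hexp : 2 * (m + 1) * Fintype.card V
      = 2 * m * Fintype.card V + 2 * Fintype.card V := by ring
  rw [hexp] at hchain
  linarith
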